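/- In the skew polynomial ring R = K[t;S,D] over a division ring K, for any f ∈ R and a ∈ K: if f(a) = 0 then f itself is a least left common multiple of f and t−a; and if f(a) ≠ 0 then (t − a^{f(a)})·f is a least left common multiple of f and t−a, i.e. R·f ∩ R·(t−a) = R·(t − a^{f(a)})·f. -/

import Mathlib

/-- The `(S,D)`-conjugate `a^c := S(c)·a·c⁻¹ + D(c)·c⁻¹`. -/
def sdConj {K : Type*} [DivisionRing K] (S : K →+* K) (D : K →+ K) (a c : K) : K :=
  S c * a * c⁻¹ + D c * c⁻¹

/-- `R` together with `ι : K →+* R` and `t : R` is the skew polynomial ring `K[t;S,D]`: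
the commutation rule `t·a = S(a)t + D(a)` holds and every element of `R` is uniquely a
polynomial `Σ ι(cᵢ)·tⁱ`. -/
def IsSkewPolyRing {K R : Type*} [DivisionRing K] [Ring R] (S : K →+* K) (D : K →+ K)
    (ι : K →+* R) (t : R) : Prop :=
  (∀ a : K, t * ι a = ι (S a) * t + ι (D a)) ∧
  (∀ r : R, ∃! c : ℕ →₀ K, r = c.sum fun i k => ι k * t ^ i)

/-- The coefficients of `r ∈ K[t;S,D]`. -/
noncomputable def coeffs {K R : Type*} [DivisionRing K] [Ring R] {S : K →+* K} {D : K →+ K}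
    {ι : K →+* R} {t : R} (h : IsSkewPolyRing S D ι t) (r : R) : ℕ →₀ K :=
  (h.2 r).choose

/-- The degree of `r ∈ K[t;S,D]` (with `deg 0 = 0`). -/
noncomputable def sdeg {K R : Type*} [DivisionRing K] [Ring R] {S : K →+* K} {D : K →+ K}
    {ι : K →+* R} {t : R} (h : IsSkewPolyRing S D ι t) (r : R) : ℕ :=
  (coeffs h r).support.sup id

/-- `r ∈ K[t;S,D]` is monic: its leading coefficient is `1`. -/
noncomputable def SMonic {K R : Type*} [DivisionRing K] [Ring R] {S : K →+* K} {D : K →+ K}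
    {ι : K →+* R} {t : R} (h : IsSkewPolyRing S D ι t) (r : R) : Prop :=
  coeffs h r (sdeg h r) = 1

section Aux

variable {K R : Type*} [DivisionRing K] [Ring R] {S : K →+* K} {D : K →+ K}
    {ι : K →+* R} {t : R}

/-- The "polynomial with coefficients `c`" map. -/
noncomputable def PP (ι : K →+* R) (t : R) (c : ℕ →₀ K) : R :=
  c.sum fun i k => ι k * t ^ i

lemma PP_zero : PP ι t 0 = 0 := Finsupp.sum_zero_index

lemma PP_add (c d : ℕ →₀ K) : PP ι t (c + d) = PP ι t c + PP ι t d :=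
  Finsupp.sum_add_index' (fun i => by simp) (fun i k l => by rw [map_add, add_mul])

lemma PP_single (i : ℕ) (k : K) : PP ι t (Finsupp.single i k) = ι k * t ^ i :=
  Finsupp.sum_single_index (by simp)

variable (h : IsSkewPolyRing S D ι t)
include h

lemma coeffs_spec (r : R) : r = PP ι t (coeffs h r) := (h.2 r).choose_spec.1

lemma coeffs_eq {r : R} {c : ℕ →₀ K} (hc : r = PP ι t c) : coeffs h r = c :=
  ((h.2 r).choose_spec.2 c hc).symm

lemma coeffs_PP (c : ℕ →₀ K) : coeffs h (PP ι t c) = c := coeffs_eq h rfl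

lemma coeffs_add (r s : R) : coeffs h (r + s) = coeffs h r + coeffs h s :=
  coeffs_eq h (by rw [PP_add, ← coeffs_spec h r, ← coeffs_spec h s])

lemma coeffs_zero : coeffs h (0 : R) = 0 := coeffs_eq h PP_zero.symm

lemma coeffs_iota (k : K) : coeffs h (ι k) = Finsupp.single 0 k :=
  coeffs_eq h (by rw [PP_single]; simp)

lemma iota_inj {k : K} (hk : ι k = 0) : k = 0 := by
  have h1 := coeffs_iota h k
  rw [hk, coeffs_zero h] at h1
  exact (Finsupp.single_eq_zero.mp h1.symm)

lemma eq_zero_of_coeffs_eq_zero {r : R} (hr : coeffs h r = 0) : r = 0 := by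
  rw [coeffs_spec h r, hr, PP_zero]

/-- Degree bound predicate. -/
def DegLe (h : IsSkewPolyRing S D ι t) (r : R) (n : ℕ) : Prop :=
  ∀ j, n < j → coeffs h r j = 0

lemma degle_zero (n : ℕ) : DegLe h (0 : R) n := fun j _ => by rw [coeffs_zero h]; rfl

lemma degle_add {r s : R} {n : ℕ} (hr : DegLe h r n) (hs : DegLe h s n) :
    DegLe h (r + s) n := fun j hj => by
  rw [coeffs_add h, Finsupp.add_apply, hr j hj, hs j hj, add_zero]

lemma degle_mono {r : R} {n m : ℕ} (hnm : n ≤ m) (hr : DegLe h r n) : DegLe h r m :=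
  fun j hj => hr j (lt_of_le_of_lt hnm hj)

lemma degle_sum {A : Type*} {s : Finset A} {g : A → R} {n : ℕ}
    (hg : ∀ i ∈ s, DegLe h (g i) n) : DegLe h (∑ i ∈ s, g i) n := by
  classical
  induction s using Finset.induction_on with
  | empty => simpa using degle_zero h n
  | insert x s hx ih =>
    rw [Finset.sum_insert hx]
    exact degle_add h (hg _ (Finset.mem_insert_self _ _))
      (ih fun i hi => hg i (Finset.mem_insert_of_mem hi))

lemma degle_monomial (i : ℕ) (k : K) : DegLe h (ι k * t ^ i) i := fun j hj => by
  rw [← PP_single, coeffs_PP h, Finsupp.single_apply, if_neg (Nat.ne_of_lt hj)]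

lemma rep (r : R) : r = ∑ i ∈ (coeffs h r).support, ι (coeffs h r i) * t ^ i :=
  coeffs_spec h r

lemma mem_support_le {r : R} {n : ℕ} (hr : DegLe h r n) {i : ℕ}
    (hi : i ∈ (coeffs h r).support) : i ≤ n := by
  by_contra hc
  exact (Finsupp.mem_support_iff.mp hi) (hr i (Nat.lt_of_not_le hc))

lemma degle_t_mul {r : R} {n : ℕ} (hr : DegLe h r n) : DegLe h (t * r) (n + 1) := by
  rw [rep h r, Finset.mul_sum]
  refine degle_sum h fun i hi => ?_
  have hin : i ≤ n := mem_support_le h hr hi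
  have : t * (ι (coeffs h r i) * t ^ i) =
      ι (S (coeffs h r i)) * t ^ (i + 1) + ι (D (coeffs h r i)) * t ^ i := by
    rw [← mul_assoc, h.1, add_mul, mul_assoc, ← pow_succ']
  rw [this]
  exact degle_add h (degle_mono h (by omega) (degle_monomial h (i + 1) _))
    (degle_mono h (by omega) (degle_monomial h i _))

lemma degle_const_mul (k : K) {r : R} {n : ℕ} (hr : DegLe h r n) :
    DegLe h (ι k * r) n := by
  rw [rep h r, Finset.mul_sum]
  refine degle_sum h fun i hi => ?_
  rw [← mul_assoc, ← map_mul]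
  exact degle_mono h (mem_support_le h hr hi) (degle_monomial h i _)

lemma degle_pow_const (i : ℕ) (b : K) : DegLe h (t ^ i * ι b) i := by
  induction i with
  | zero => simpa using degle_monomial h 0 b
  | succ i ih =>
    rw [pow_succ', mul_assoc]
    exact degle_t_mul h ih

lemma degle_mul_const (b : K) {r : R} {n : ℕ} (hr : DegLe h r n) :
    DegLe h (r * ι b) n := by
  rw [rep h r, Finset.sum_mul]
  refine degle_sum h fun i hi => ?_
  rw [mul_assoc]
  exact degle_mono h (mem_support_le h hr hi)
    (degle_const_mul h _ (degle_pow_const h i b))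

lemma coeffs_mul_t (r : R) (j : ℕ) : coeffs h (r * t) (j + 1) = coeffs h r j := by
  have key : r * t = PP ι t (Finsupp.mapDomain Nat.succ (coeffs h r)) := by
    unfold PP
    rw [Finsupp.sum_mapDomain_index (by simp) (by intro b m1 m2; rw [map_add, add_mul])]
    conv_lhs => rw [coeffs_spec h r]
    unfold PP
    rw [Finsupp.sum_mul]
    exact Finsupp.sum_congr fun i _ => by rw [mul_assoc, ← pow_succ]
  rw [key, coeffs_PP h]
  exact Finsupp.mapDomain_apply Nat.succ_injective _ j

/-- No nonzero constant is a left multiple of `t - ι b`. -/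
lemma const_lemma {u : R} {d b : K} (hu : u * (t - ι b) = ι d) : d = 0 := by
  by_cases h0 : u = 0
  · rw [h0, zero_mul] at hu
    exact iota_inj h hu.symm
  · exfalso
    have hc : coeffs h u ≠ 0 := fun hc => h0 (eq_zero_of_coeffs_eq_zero h hc)
    have hne : (coeffs h u).support.Nonempty := Finsupp.support_nonempty_iff.mpr hc
    set n := (coeffs h u).support.max' hne with hn
    have hmem : n ∈ (coeffs h u).support := Finset.max'_mem _ hne
    have hlead : coeffs h u n ≠ 0 := Finsupp.mem_support_iff.mp hmem
    have hdeg : DegLe h u n := by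
      intro j hj
      by_contra hcj
      exact absurd (Finset.le_max' _ j (Finsupp.mem_support_iff.mpr hcj)) (Nat.not_le.mpr hj)
    have heq : u * t = ι d + u * ι b := by
      rw [← hu]; noncomm_ring
    have := congrArg (fun c => c (n + 1)) (congrArg (coeffs h) heq)
    rw [coeffs_mul_t h, coeffs_add h, Finsupp.add_apply, coeffs_iota h,
      Finsupp.single_apply, if_neg (by omega), degle_mul_const h b hdeg (n + 1) (by omega),
      zero_add] at this
    exact hlead this

/-- Right division by a monic linear polynomial. -/
lemma divmod (p : R) (b : K) : ∃ q : R, ∃ c : K, p = q * (t - ι b) + ι c := by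
  have mono : ∀ i : ℕ, ∃ q : R, ∃ c : K, t ^ i = q * (t - ι b) + ι c := by
    intro i
    induction i with
    | zero => exact ⟨0, 1, by simp⟩
    | succ i ih =>
      obtain ⟨q, c, hqc⟩ := ih
      refine ⟨t * q + ι (S c), S c * b + D c, ?_⟩
      have ht : t * ι c = ι (S c) * t + ι (D c) := h.1 c
      rw [pow_succ', hqc, mul_add, ht, map_add, map_mul]
      noncomm_ring
  have key : ∀ c : ℕ →₀ K, ∃ q : R, ∃ d : K, PP ι t c = q * (t - ι b) + ι d := by
    intro c
    induction c using Finsupp.induction with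
    | zero => exact ⟨0, 0, by simp [PP_zero]⟩
    | single_add i k f _ _ ihf =>
      obtain ⟨q, d, hqd⟩ := ihf
      obtain ⟨q', c', hqc'⟩ := mono i
      refine ⟨ι k * q' + q, k * c' + d, ?_⟩
      rw [PP_add, PP_single, hqd, hqc', map_add, map_mul]
      noncomm_ring
  obtain ⟨q, d, hqd⟩ := key (coeffs h p)
  exact ⟨q, d, by rw [coeffs_spec h p]; exact hqd⟩

end Aux

/-- If `f(a) = 0` then `f` is a least left common multiple of `f` and `t−a`; if
`f(a) ≠ 0` then `R·f ∩ R·(t−a) = R·(t − a^{f(a)})·f`. -/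
theorem llcm_with_linear {K R : Type*} [DivisionRing K] [Ring R] (S : K →+* K) (D : K →+ K)
    (hD : ∀ a b : K, D (a * b) = S a * D b + D a * b)
    (ι : K →+* R) (t : R) (h : IsSkewPolyRing S D ι t)
    (f : R) (a ev : K) (hev : f - ι ev ∈ Ideal.span {t - ι a}) :
    (ev = 0 → Ideal.span {f} ⊓ Ideal.span {t - ι a} = Ideal.span {f}) ∧
    (ev ≠ 0 → Ideal.span {f} ⊓ Ideal.span {t - ι a} =
      Ideal.span {(t - ι (sdConj S D a ev)) * f}) := by
  constructor
  · intro h0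
    subst h0
    rw [map_zero, sub_zero] at hev
    exact inf_eq_left.mpr (Ideal.span_le.mpr (Set.singleton_subset_iff.mpr hev))
  · intro hne
    obtain ⟨q, hq⟩ := Ideal.mem_span_singleton'.mp hev
    set α := sdConj S D a ev with hα
    have hf : f = q * (t - ι a) + ι ev := by rw [hq]; noncomm_ring
    have hαev : α * ev = S ev * a + D ev := by
      simp [hα, sdConj, add_mul, mul_assoc, inv_mul_cancel₀ hne]
    have key : (t - ι α) * ι ev = ι (S ev) * (t - ι a) := by
      rw [sub_mul, h.1 ev, ← map_mul, hαev, map_add, mul_sub, ← map_mul]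
      noncomm_ring
    have hTf : (t - ι α) * f = ((t - ι α) * q + ι (S ev)) * (t - ι a) := by
      rw [hf, mul_add, key]
      noncomm_ring
    have hTfmem : (t - ι α) * f ∈ Ideal.span {t - ι a} :=
      Ideal.mem_span_singleton'.mpr ⟨(t - ι α) * q + ι (S ev), hTf.symm⟩
    apply le_antisymm
    · intro g hg
      rw [Submodule.mem_inf] at hg
      obtain ⟨p, hp⟩ := Ideal.mem_span_singleton'.mp hg.1
      obtain ⟨q', c, hdiv⟩ := divmod h p α
      have hcf : ι c * f ∈ Ideal.span {t - ι a} := by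
        have : ι c * f = g - q' * ((t - ι α) * f) := by
          rw [← hp, hdiv]; noncomm_ring
        rw [this]
        exact Ideal.sub_mem _ hg.2 (Ideal.mul_mem_left _ _ hTfmem)
      have hcev : ι (c * ev) ∈ Ideal.span {t - ι a} := by
        have : ι (c * ev) = ι c * f - ι c * (f - ι ev) := by
          rw [map_mul]; noncomm_ring
        rw [this]
        exact Ideal.sub_mem _ hcf (Ideal.mul_mem_left _ _ hev)
      obtain ⟨u, hu⟩ := Ideal.mem_span_singleton'.mp hcev
      have hc0 : c = 0 := by
        have := const_lemma h hu
        rcases mul_eq_zero.mp this with h1 | h2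
        · exact h1
        · exact absurd h2 hne
      refine Ideal.mem_span_singleton'.mpr ⟨q', ?_⟩
      rw [← hp, hdiv, hc0, map_zero]
      noncomm_ring
    · refine Ideal.span_le.mpr (Set.singleton_subset_iff.mpr ?_)
      exact Submodule.mem_inf.mpr ⟨Ideal.mem_span_singleton'.mpr ⟨t - ι α, rfl⟩, hTfmem⟩
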